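/- Let H be a complex Hilbert space, Ω ∈ H a unit vector, and ψ the vector state on B(H) given by ψ(X) = ⟨Ω, X Ω⟩. Let I be an index set, for each ordered pair (a,b) ∈ I × I let α_{ab} be a *-algebra automorphism of B(H) with α_{ab} ∘ α_{bc} = α_{ac} for all a, b, c ∈ I, and let V_{ab} and U_{ab} both be unitary operators satisfying ψ(α_{ab}⁻¹(X)) = ψ(V_{ab}⁻¹ X V_{ab}) = ψ(U_{ab}⁻¹ X U_{ab}) for all X ∈ B(H). Set g_{ab} := ψ(V_{ab}⁻¹ U_{ab}). Then |g_{ab}| = 1, and for all a, b, c ∈ I one has ψ(U_{ac}⁻¹ α_{ab}(U_{bc}) U_{ab}) = g_{ab} · conj(g_{ac}) · g_{bc} · ψ(V_{ac}⁻¹ α_{ab}(V_{bc}) V_{ab}); that is, the two 2-cocycles built from the families U and V differ by the coboundary of g. -/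

import Mathlib

private lemma sq_one_norm (r : ℝ) (hr : 0 ≤ r) (h : r ^ 2 = 1) : r = 1 := by
  have h' : (r - 1) * (r + 1) = 0 := by ring_nf; linarith
  rcases mul_eq_zero.mp h' with h'' | h'' <;> linarith

private lemma eqcase' {H : Type*} [NormedAddCommGroup H] [InnerProductSpace ℂ H]
    (x y : H) (hx : ‖x‖ = 1) (hy : ‖y‖ = 1)
    (h : ‖(inner ℂ x y : ℂ)‖ = 1) : y = (inner ℂ x y : ℂ) • x := by
  set c : ℂ := inner ℂ x y with hc
  have hcc : (starRingEnd ℂ) c * c = 1 := by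
    rw [RCLike.conj_mul, h]; norm_num
  have hxx : (inner ℂ x x : ℂ) = 1 := by
    rw [inner_self_eq_norm_sq_to_K, hx]; norm_num
  have hyy : (inner ℂ y y : ℂ) = 1 := by
    rw [inner_self_eq_norm_sq_to_K, hy]; norm_num
  have hyx : (inner ℂ y x : ℂ) = (starRingEnd ℂ) c := by
    rw [hc, ← inner_conj_symm]
  have h0 : y - c • x = 0 := by
    rw [← inner_self_eq_zero (𝕜 := ℂ)]
    simp only [inner_sub_left, inner_sub_right, inner_smul_left, inner_smul_right,
      hxx, hyy, hyx, ← hc]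
    linear_combination -hcc
  linear_combination (norm := module) h0

private lemma states_eq' {H : Type*} [NormedAddCommGroup H] [InnerProductSpace ℂ H]
    (u v : H) (hv : ‖v‖ = 1)
    (h : ∀ X : H →L[ℂ] H, (inner ℂ u (X u) : ℂ) = inner ℂ v (X v)) :
    ‖(inner ℂ v u : ℂ)‖ = 1 := by
  have hX := h ((innerSL ℂ v).smulRight v)
  simp only [ContinuousLinearMap.smulRight_apply, innerSL_apply_apply, inner_smul_right] at hX
  have hvv : (inner ℂ v v : ℂ) = 1 := by
    rw [inner_self_eq_norm_sq_to_K, hv]; norm_num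
  rw [hvv, one_mul, ← inner_conj_symm u v, RCLike.mul_conj] at hX
  apply sq_one_norm _ (norm_nonneg _)
  exact_mod_cast congrArg Complex.re hX

private lemma unitary_norm_map' {H : Type*} [NormedAddCommGroup H] [InnerProductSpace ℂ H]
    [CompleteSpace H] {W : H →L[ℂ] H} (hW : W ∈ unitary (H →L[ℂ] H)) (x : H) :
    ‖W x‖ = ‖x‖ := by
  have h1 : (inner ℂ (W x) (W x) : ℂ) = inner ℂ x x := by
    rw [← ContinuousLinearMap.adjoint_inner_right, ← ContinuousLinearMap.star_eq_adjoint,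
      ← ContinuousLinearMap.mul_apply, hW.1, ContinuousLinearMap.one_apply]
  rw [inner_self_eq_norm_sq_to_K, inner_self_eq_norm_sq_to_K] at h1
  have h2 : ‖W x‖ ^ 2 = ‖x‖ ^ 2 := by exact_mod_cast h1
  nlinarith [norm_nonneg (W x), norm_nonneg x]

set_option synthInstance.maxHeartbeats 200000 in
theorem cech_two_cocycle_coboundary_independence
    {H : Type*} [NormedAddCommGroup H] [InnerProductSpace ℂ H] [CompleteSpace H]
    {I : Type*} (Ω : H) (hΩ : ‖Ω‖ = 1)
    (ψ : (H →L[ℂ] H) → ℂ) (hψ : ∀ X, ψ X = inner ℂ Ω (X Ω))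
    (α : I → I → ((H →L[ℂ] H) ≃⋆ₐ[ℂ] (H →L[ℂ] H)))
    (hα : ∀ a b c X, α a b (α b c X) = α a c X)
    (V U : I → I → (H →L[ℂ] H))
    (hVu : ∀ a b, V a b ∈ unitary (H →L[ℂ] H))
    (hUu : ∀ a b, U a b ∈ unitary (H →L[ℂ] H))
    (hV : ∀ a b X, ψ ((α a b).symm X) = ψ (star (V a b) * X * V a b))
    (hU : ∀ a b X, ψ ((α a b).symm X) = ψ (star (U a b) * X * U a b)) :
    ∀ a b c : I,
      ‖ψ (star (V a b) * U a b)‖ = 1 ∧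
      ψ (star (U a c) * α a b (U b c) * U a b) =
        ψ (star (V a b) * U a b) * (starRingEnd ℂ) (ψ (star (V a c) * U a c)) *
          ψ (star (V b c) * U b c) * ψ (star (V a c) * α a b (V b c) * V a b) := by
  -- ψ of star A * B is an inner product of images of Ω
  have hψ' : ∀ A B : H →L[ℂ] H, ψ (star A * B) = inner ℂ (A Ω) (B Ω) := by
    intro A B
    rw [hψ, ContinuousLinearMap.mul_apply, ContinuousLinearMap.star_eq_adjoint,
      ContinuousLinearMap.adjoint_inner_right]
  -- key fact for each pair: U Ω = g • V Ω, ‖g‖ = 1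
  have key : ∀ p q : I, ‖ψ (star (V p q) * U p q)‖ = 1 ∧
      U p q Ω = (ψ (star (V p q) * U p q)) • V p q Ω := by
    intro p q
    have hvn : ‖V p q Ω‖ = 1 := by rw [unitary_norm_map' (hVu p q), hΩ]
    have hun : ‖U p q Ω‖ = 1 := by rw [unitary_norm_map' (hUu p q), hΩ]
    have hstates : ∀ X : H →L[ℂ] H,
        (inner ℂ (U p q Ω) (X (U p q Ω)) : ℂ) = inner ℂ (V p q Ω) (X (V p q Ω)) := by
      intro X
      have h1 := (hU p q X).symm.trans (hV p q X)
      rw [mul_assoc, mul_assoc, hψ', hψ'] at h1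
      simpa [ContinuousLinearMap.mul_apply] using h1
    have hn := states_eq' (U p q Ω) (V p q Ω) hvn hstates
    have heq := eqcase' (V p q Ω) (U p q Ω) hvn hun hn
    rw [hψ']
    exact ⟨hn, heq⟩
  intro a b c
  refine ⟨(key a b).1, ?_⟩
  set W : H →L[ℂ] H := α a b (V b c) with hW
  set W' : H →L[ℂ] H := α a b (U b c) with hW'
  -- W, W' are unitary
  have hWmem : W ∈ unitary (H →L[ℂ] H) := by
    constructor <;> rw [hW, ← map_star, ← map_mul]
    · rw [(hVu b c).1, map_one]
    · rw [(hVu b c).2, map_one]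
  have hW'mem : W' ∈ unitary (H →L[ℂ] H) := by
    constructor <;> rw [hW', ← map_star, ← map_mul]
    · rw [(hUu b c).1, map_one]
    · rw [(hUu b c).2, map_one]
  have hvabn : ‖V a b Ω‖ = 1 := by rw [unitary_norm_map' (hVu a b), hΩ]
  -- inner of the two transported vectors is g_{bc}
  have hinner : (inner ℂ (W (V a b Ω)) (W' (V a b Ω)) : ℂ) = ψ (star (V b c) * U b c) := by
    have h1 : (inner ℂ (W (V a b Ω)) (W' (V a b Ω)) : ℂ)
        = ψ (star (V a b) * (star W * W') * V a b) := by
      rw [mul_assoc, hψ']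
      simp only [ContinuousLinearMap.mul_apply]
      rw [ContinuousLinearMap.star_eq_adjoint, ContinuousLinearMap.adjoint_inner_right]
    have h2 : star W * W' = α a b (star (V b c) * U b c) := by
      rw [hW, hW', map_mul, map_star]
    have h3 : (α a b).symm (star W * W') = star (V b c) * U b c := by
      rw [h2]; exact (α a b).symm_apply_apply _
    rw [h1, ← hV a b, h3]
  have hkey2 : W' (V a b Ω) = (ψ (star (V b c) * U b c)) • W (V a b Ω) := by
    have hn1 : ‖W (V a b Ω)‖ = 1 := by rw [unitary_norm_map' hWmem, hvabn]
    have hn2 : ‖W' (V a b Ω)‖ = 1 := by rw [unitary_norm_map' hW'mem, hvabn]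
    have := eqcase' (W (V a b Ω)) (W' (V a b Ω)) hn1 hn2 (by rw [hinner]; exact (key b c).1)
    rw [this, hinner]
  -- now compute
  have lhs : ψ (star (U a c) * W' * U a b) = inner ℂ (U a c Ω) (W' (U a b Ω)) := by
    rw [mul_assoc, hψ']
    simp [ContinuousLinearMap.mul_apply]
  have rhs : ψ (star (V a c) * W * V a b) = inner ℂ (V a c Ω) (W (V a b Ω)) := by
    rw [mul_assoc, hψ']
    simp [ContinuousLinearMap.mul_apply]
  rw [lhs, rhs, (key a c).2, (key a b).2, map_smul, hkey2, inner_smul_left,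
    inner_smul_right, inner_smul_right]
  have gac : ψ (star (V a c) * U a c) = inner ℂ (V a c Ω) (U a c Ω) := hψ' _ _
  ring
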